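/- For all integers m ≥ 1 and n ≥ 1: Σ_{k=1}^{n} H_k · Σ_{j=m}^{n−k+1} C(n−k, j−1) s(j,m)/j! = (1/m!)·H_{n+1}(m+1). -/

import Mathlib

open Finset

/-- Multiple harmonic-like numbers `H_n(m)`: the sum of `1/(k_1 ⋯ k_m)` over all
`m`-tuples of positive integers with `k_1 + ⋯ + k_m ≤ n`. -/
def Hml (n m : ℕ) : ℚ :=
  ∑ k ∈ (Fintype.piFinset fun _ : Fin m => Finset.Icc 1 n).filter
      (fun k => ∑ i, k i ≤ n),
    ∏ i, (1 : ℚ) / (k i : ℚ)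

/-- The `n`-th harmonic number. -/
def harm (n : ℕ) : ℚ := ∑ j ∈ Finset.Icc 1 n, (1 : ℚ) / (j : ℚ)

/-- The `n`-th second-order harmonic number. -/
def harm2 (n : ℕ) : ℚ := ∑ j ∈ Finset.Icc 1 n, (1 : ℚ) / (j : ℚ) ^ 2

/-- The `n`-th odd harmonic number. -/
def oddharm (n : ℕ) : ℚ := ∑ k ∈ Finset.Icc 1 n, (1 : ℚ) / (2 * (k : ℚ) - 1)

/-- Signed Stirling numbers of the first kind. -/
def stirlingFirst : ℕ → ℕ → ℤ
  | 0, 0 => 1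
  | 0, _ + 1 => 0
  | _ + 1, 0 => 0
  | n + 1, k + 1 => stirlingFirst n k - n * stirlingFirst n (k + 1)

/-- Generalized binomial coefficient `C(r, k) = r(r−1)⋯(r−k+1)/k!`. -/
noncomputable def gchoose (r : ℂ) (k : ℕ) : ℂ :=
  (∏ i ∈ Finset.range k, (r - i)) / (k.factorial : ℂ)

def HS (n m : ℕ) : Finset (Fin m → ℕ) :=
  (Fintype.piFinset fun _ : Fin m => Finset.Icc 1 n).filter (fun k => ∑ i, k i ≤ n)

lemma mem_HS {n m : ℕ} {f : Fin m → ℕ} :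
    f ∈ HS n m ↔ (∀ i, 1 ≤ f i) ∧ ∑ i, f i ≤ n := by
  simp only [HS, Finset.mem_filter, Fintype.mem_piFinset, Finset.mem_Icc]
  constructor
  · rintro ⟨h1, h2⟩; exact ⟨fun i => (h1 i).1, h2⟩
  · rintro ⟨h1, h2⟩
    refine ⟨fun i => ⟨h1 i, le_trans ?_ h2⟩, h2⟩
    exact Finset.single_le_sum (fun j _ => Nat.zero_le _) (Finset.mem_univ i)

lemma Hml_eq (n m : ℕ) : Hml n m = ∑ k ∈ HS n m, ∏ i, (1:ℚ)/(k i : ℚ) := rfl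

lemma Hml_zero_right (n : ℕ) : Hml n 0 = 1 := by
  rw [Hml_eq]
  have h : HS n 0 = {![]} := by
    ext f
    simp [mem_HS, Subsingleton.elim f ![]]
  rw [h]
  simp

lemma Hml_zero_left {m : ℕ} (hm : 1 ≤ m) : Hml 0 m = 0 := by
  rw [Hml_eq]
  have h : HS 0 m = ∅ := by
    ext f
    simp only [mem_HS, Finset.notMem_empty, iff_false, not_and]
    intro h1 h2
    have : 1 ≤ ∑ i, f i := le_trans (h1 ⟨0, hm⟩)
      (Finset.single_le_sum (fun j _ => Nat.zero_le _) (Finset.mem_univ _))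
    omega
  rw [h, Finset.sum_empty]

lemma Hml_succ (n m : ℕ) :
    Hml n (m+1) = ∑ k ∈ Finset.Icc 1 n, (1:ℚ)/(k:ℚ) * Hml (n-k) m := by
  rw [Hml_eq]
  have h : ∀ k ∈ Finset.Icc 1 n, (1:ℚ)/(k:ℚ) * Hml (n-k) m
      = ∑ g ∈ HS (n-k) m, (1:ℚ)/(k:ℚ) * ∏ i, (1:ℚ)/(g i : ℚ) := by
    intro k _; rw [Hml_eq, Finset.mul_sum]
  rw [Finset.sum_congr rfl h, Finset.sum_sigma']
  refine Finset.sum_nbij' (i := fun f => ⟨f 0, Fin.tail f⟩)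
    (j := fun p => Fin.cons p.1 p.2) ?_ ?_ ?_ ?_ ?_
  · intro f hf
    rw [mem_HS] at hf
    obtain ⟨h1, h2⟩ := hf
    rw [Fin.sum_univ_succ] at h2
    simp only [Finset.mem_sigma, Finset.mem_Icc, mem_HS]
    have ht : (∑ i : Fin m, Fin.tail f i) = ∑ i : Fin m, f i.succ := rfl
    refine ⟨⟨h1 0, by omega⟩, fun i => h1 _, by omega⟩
  · intro p hp
    simp only [Finset.mem_sigma, Finset.mem_Icc, mem_HS] at hp
    obtain ⟨⟨hk1, hk2⟩, h1, h2⟩ := hp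
    rw [mem_HS]
    constructor
    · intro i
      refine Fin.cases ?_ ?_ i
      · simpa using hk1
      · intro j; simpa using h1 j
    · rw [Fin.sum_univ_succ]
      simp only [Fin.cons_zero, Fin.cons_succ]
      omega
  · intro f _; exact Fin.cons_self_tail f
  · intro p _
    simp [Fin.tail_cons]
  · intro f hf
    rw [Fin.prod_univ_succ]
    simp [Fin.tail]

lemma sum_Icc_reflect (N : ℕ) (g : ℕ → ℚ) :
    ∑ k ∈ Finset.Icc 1 N, g (N + 1 - k) = ∑ k ∈ Finset.Icc 1 N, g k := by
  refine Finset.sum_nbij' (i := fun k => N + 1 - k) (j := fun k => N + 1 - k)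
    ?_ ?_ ?_ ?_ ?_ <;> intros a ha <;> simp_all [Finset.mem_Icc] <;> omega

lemma sum_Icc_telescope (N : ℕ) (f : ℕ → ℚ) :
    ∑ k ∈ Finset.Icc 1 N, (f k - f (k-1)) = f N - f 0 := by
  induction N with
  | zero => simp
  | succ n ih =>
    rw [Finset.sum_Icc_succ_top (by omega), ih]
    simp only [Nat.add_sub_cancel]
    ring

lemma star (m : ℕ) : ∀ n : ℕ, 1 ≤ n →
    (n:ℚ) * (Hml n (m+1) - Hml (n-1) (m+1)) = ((m:ℚ)+1) * Hml (n-1) m := by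
  induction m with
  | zero =>
    intro n hn
    obtain ⟨n', rfl⟩ : ∃ n', n = n' + 1 := ⟨n - 1, by omega⟩
    have e0 : (n' + 1 : ℕ) - 1 = n' := by omega
    rw [e0, Hml_zero_right, Hml_succ, Hml_succ,
      Finset.sum_Icc_succ_top (by omega : 1 ≤ n' + 1)]
    simp only [Hml_zero_right, mul_one]
    have h0 : ((n':ℚ)+1) ≠ 0 := by positivity
    push_cast
    field_simp
    ring
  | succ m ih =>
    intro n hn
    obtain ⟨n', rfl⟩ : ∃ n', n = n' + 1 := ⟨n - 1, by omega⟩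
    have e0 : (n' + 1 : ℕ) - 1 = n' := by omega
    rw [e0, Hml_succ, Hml_succ, Finset.sum_Icc_succ_top (by omega : 1 ≤ n' + 1)]
    have hz : Hml (n' + 1 - (n' + 1)) (m+1) = 0 := by
      simp [Hml_zero_left]
    rw [hz, mul_zero, add_zero, ← Finset.sum_sub_distrib, Finset.mul_sum]
    have key : ∀ k ∈ Finset.Icc 1 n',
        ((n'+1 : ℕ):ℚ) * ((1:ℚ)/(k:ℚ) * Hml (n'+1-k) (m+1) - 1/(k:ℚ) * Hml (n'-k) (m+1))
        = ((m:ℚ)+1) * ((1:ℚ)/(k:ℚ) * Hml (n'-k) m)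
          + (Hml (n'+1-k) (m+1) - Hml ((n'+1-k)-1) (m+1)) := by
      intro k hk
      rw [Finset.mem_Icc] at hk
      have ihk := ih (n'+1-k) (by omega)
      have e1 : (n'+1-k) - 1 = n' - k := by omega
      rw [e1] at ihk ⊢
      have hc : ((n'+1-k : ℕ):ℚ) = (n':ℚ)+1-(k:ℚ) := by
        push_cast [Nat.cast_sub (show k ≤ n'+1 by omega)]
        ring
      rw [hc] at ihk
      have hk0 : (k:ℚ) ≠ 0 := by
        have : 1 ≤ k := hk.1
        positivity
      push_cast
      field_simp
      linear_combination ihk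
    rw [Finset.sum_congr rfl key, Finset.sum_add_distrib, ← Finset.mul_sum,
      ← Hml_succ n' m,
      sum_Icc_reflect n' (fun s => Hml s (m+1) - Hml (s-1) (m+1)),
      sum_Icc_telescope n' (fun s => Hml s (m+1)),
      Hml_zero_left (by omega : 1 ≤ m+1)]
    push_cast
    ring

lemma stirling_succ_succ (n k : ℕ) :
    stirlingFirst (n+1) (k+1) = stirlingFirst n k - n * stirlingFirst n (k+1) := rfl

lemma stirling_zero_right (n : ℕ) (hn : 1 ≤ n) : stirlingFirst n 0 = 0 := by
  obtain ⟨n', rfl⟩ : ∃ n', n = n' + 1 := ⟨n - 1, by omega⟩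
  rfl

lemma stirling_eq_zero : ∀ j m : ℕ, j < m → stirlingFirst j m = 0 := by
  intro j
  induction j with
  | zero => intro m hm; obtain ⟨m', rfl⟩ : ∃ m', m = m' + 1 := ⟨m - 1, by omega⟩; rfl
  | succ j ih =>
    intro m hm
    obtain ⟨m', rfl⟩ : ∃ m', m = m' + 1 := ⟨m - 1, by omega⟩
    rw [stirling_succ_succ, ih m' (by omega), ih (m'+1) (by omega)]
    ring

/-- range-form of the inner Stirling sum. -/
def Fr (t m : ℕ) : ℚ :=
  ∑ i ∈ Finset.range (t+1),
    (t.choose i : ℚ) * (stirlingFirst (i+1) m : ℚ) / ((i+1).factorial : ℚ)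

lemma choose_id (t i : ℕ) (h : i ≤ t) :
    ((t:ℚ)+2) * (((t+1).choose (i+1) : ℕ) : ℚ)
      = ((t:ℚ)+(i:ℚ)+3) * ((t.choose (i+1) : ℕ) : ℚ) + ((i:ℚ)+2) * ((t.choose i : ℕ) : ℚ) := by
  have h1 : ((t.choose (i+1) : ℕ) : ℚ) * ((i:ℚ)+1) = ((t.choose i : ℕ) : ℚ) * ((t:ℚ)-(i:ℚ)) := by
    have h2 := Nat.choose_succ_right_eq t i
    have h3 : ((t - i : ℕ) : ℚ) = (t:ℚ) - (i:ℚ) := by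
      push_cast [Nat.cast_sub h]; ring
    calc ((t.choose (i+1) : ℕ) : ℚ) * ((i:ℚ)+1) = ((t.choose (i+1) * (i+1) : ℕ) : ℚ) := by push_cast; ring
    _ = ((t.choose i * (t - i) : ℕ) : ℚ) := by rw [h2]
    _ = ((t.choose i : ℕ) : ℚ) * ((t:ℚ)-(i:ℚ)) := by push_cast [Nat.cast_sub h]; ring
  have h4 : (((t+1).choose (i+1) : ℕ) : ℚ) = ((t.choose i : ℕ) : ℚ) + ((t.choose (i+1) : ℕ) : ℚ) := by
    rw [Nat.choose_succ_succ]
    push_cast; ring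
  linear_combination ((t:ℚ)+2) * h4 - h1

lemma factS_ne (i : ℕ) : ((i.factorial : ℕ) : ℚ) ≠ 0 := by
  exact_mod_cast i.factorial_pos.ne'

lemma Frec (t m : ℕ) :
    ((t:ℚ)+2) * Fr (t+1) (m+1) = ((t:ℚ)+1) * Fr t (m+1) + Fr t m := by
  have hs : ∀ j : ℕ, (stirlingFirst (j+1) m : ℚ)
      = (stirlingFirst (j+2) (m+1) : ℚ) + ((j:ℚ)+1) * (stirlingFirst (j+1) (m+1) : ℚ) := by
    intro j
    have h := stirling_succ_succ (j+1) m
    push_cast [h]; ring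
  have hRHS : ((t:ℚ)+1) * Fr t (m+1) + Fr t m
      = (∑ i ∈ Finset.range (t+1), ((t:ℚ)+2+(i:ℚ)) * (t.choose i : ℚ) *
            (stirlingFirst (i+1) (m+1) : ℚ) / ((i+1).factorial : ℚ))
        + ∑ i ∈ Finset.range (t+1), (t.choose i : ℚ) *
            (stirlingFirst (i+2) (m+1) : ℚ) / ((i+1).factorial : ℚ) := by
    rw [Fr, Fr, Finset.mul_sum, ← Finset.sum_add_distrib, ← Finset.sum_add_distrib]
    refine Finset.sum_congr rfl fun i _ => ?_
    rw [hs i]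
    have hf := factS_ne (i+1)
    field_simp
    ring
  rw [hRHS]
  have hL1 : ((t:ℚ)+2) * Fr (t+1) (m+1)
      = ∑ i ∈ Finset.range (t+2), ((t:ℚ)+2) * ((t+1).choose i : ℚ) *
          (stirlingFirst (i+1) (m+1) : ℚ) / ((i+1).factorial : ℚ) := by
    rw [Fr, Finset.mul_sum]
    refine Finset.sum_congr rfl fun i _ => ?_
    ring
  rw [hL1, Finset.sum_range_succ' _ (t+1)]
  have key : ∀ i ∈ Finset.range (t+1),
      ((t:ℚ)+2) * ((t+1).choose (i+1) : ℚ) *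
          (stirlingFirst (i+1+1) (m+1) : ℚ) / ((i+1+1).factorial : ℚ)
      = ((t:ℚ)+2+((i:ℚ)+1)) * (t.choose (i+1) : ℚ) *
            (stirlingFirst (i+2) (m+1) : ℚ) / ((i+2).factorial : ℚ)
        + (t.choose i : ℚ) * (stirlingFirst (i+2) (m+1) : ℚ) / ((i+1).factorial : ℚ) := by
    intro i hi
    rw [Finset.mem_range] at hi
    have hid := choose_id t i (by omega)
    have hfs : ((i+2).factorial : ℚ) = ((i:ℚ)+2) * ((i+1).factorial : ℚ) := by
      rw [Nat.factorial_succ]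
      push_cast
      ring
    have hf := factS_ne (i+1)
    have hf2 := factS_ne (i+2)
    have he : i+1+1 = i+2 := rfl
    rw [he, div_add_div _ _ hf2 hf, div_eq_div_iff hf2 (mul_ne_zero hf2 hf), hfs]
    linear_combination (((i:ℚ)+2) * ((i+1).factorial : ℚ) * ((i+1).factorial : ℚ) *
      (stirlingFirst (i+2) (m+1) : ℚ)) * hid
  rw [Finset.sum_congr rfl key, Finset.sum_add_distrib]
  have hB : ∑ i ∈ Finset.range (t+1), ((t:ℚ)+2+((i:ℚ)+1)) * (t.choose (i+1) : ℚ) *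
        (stirlingFirst (i+2) (m+1) : ℚ) / ((i+2).factorial : ℚ)
      = (∑ i ∈ Finset.range (t+1), ((t:ℚ)+2+(i:ℚ)) * (t.choose i : ℚ) *
            (stirlingFirst (i+1) (m+1) : ℚ) / ((i+1).factorial : ℚ))
        - ((t:ℚ)+2) * (t.choose 0 : ℚ) * (stirlingFirst 1 (m+1) : ℚ) / ((1).factorial : ℚ) := by
    have h1 := Finset.sum_range_succ'
      (fun i => ((t:ℚ)+2+(i:ℚ)) * (t.choose i : ℚ) *
        (stirlingFirst (i+1) (m+1) : ℚ) / ((i+1).factorial : ℚ)) (t+1)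
    have h2 := Finset.sum_range_succ
      (fun i => ((t:ℚ)+2+(i:ℚ)) * (t.choose i : ℚ) *
        (stirlingFirst (i+1) (m+1) : ℚ) / ((i+1).factorial : ℚ)) (t+1)
    have hz : ((t:ℚ)+2+((t+1:ℕ):ℚ)) * ((t.choose (t+1) : ℕ) : ℚ) *
        (stirlingFirst (t+1+1) (m+1) : ℚ) / (((t+1+1).factorial : ℕ) : ℚ) = 0 := by
      rw [Nat.choose_eq_zero_of_lt (by omega)]
      push_cast
      ring
    have hcong : ∀ i ∈ Finset.range (t+1),
        ((t:ℚ)+2+((i:ℚ)+1)) * (t.choose (i+1) : ℚ) *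
          (stirlingFirst (i+2) (m+1) : ℚ) / ((i+2).factorial : ℚ)
        = ((t:ℚ)+2+((i+1:ℕ):ℚ)) * (t.choose (i+1) : ℚ) *
          (stirlingFirst ((i+1)+1) (m+1) : ℚ) / (((i+1)+1).factorial : ℚ) := by
      intro i _
      push_cast
      ring_nf
    rw [Finset.sum_congr rfl hcong]
    push_cast at h1 h2 hz ⊢
    norm_num at h1 h2 hz ⊢
    linarith [h1, h2, hz]
  rw [hB]
  have hA0 : ((t:ℚ)+2) * ((t+1).choose 0 : ℚ) *
        (stirlingFirst (0+1) (m+1) : ℚ) / ((0+1).factorial : ℚ)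
      = ((t:ℚ)+2) * (t.choose 0 : ℚ) * (stirlingFirst 1 (m+1) : ℚ) / ((1).factorial : ℚ) := by
    simp
  rw [hA0]
  ring

lemma KL (t : ℕ) : ∀ m : ℕ,
    Fr t (m+1) = Hml t m / (((t:ℚ)+1) * (m.factorial : ℚ)) := by
  induction t with
  | zero =>
    intro m
    match m with
    | 0 =>
      rw [Hml_zero_right]
      simp [Fr]
      norm_num [stirlingFirst]
    | m'+1 =>
      rw [Hml_zero_left (by omega)]
      simp [Fr]
      norm_num [stirlingFirst, stirling_eq_zero 0 (m'+1) (by omega)]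
  | succ t ih =>
    intro m
    have hrec := Frec t m
    match m with
    | 0 =>
      have hz : Fr t 0 = 0 := by
        rw [Fr]
        refine Finset.sum_eq_zero fun i _ => ?_
        rw [stirling_zero_right (i+1) (by omega)]
        push_cast
        ring
      rw [hz, ih 0, Hml_zero_right] at hrec
      rw [Hml_zero_right]
      have h1 : ((t:ℚ)+1) ≠ 0 := by positivity
      have h2 : ((t:ℚ)+2) ≠ 0 := by positivity
      push_cast at hrec ⊢
      field_simp at hrec ⊢
      linarith [hrec]
    | m'+1 =>
      have hstar := star m' (t+1) (by omega)
      simp only [Nat.add_sub_cancel] at hstar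
      have goal' : ((t:ℚ)+1) * Hml (t+1) (m'+1)
          = ((t:ℚ)+1) * Hml t (m'+1) + ((m':ℚ)+1) * Hml t m' := by
        push_cast at hstar
        linear_combination hstar
      have hfact : (((m'+1).factorial : ℕ) : ℚ) = ((m':ℚ)+1) * ((m'.factorial : ℕ) : ℚ) := by
        rw [Nat.factorial_succ]; push_cast; ring
      have h1 : ((t:ℚ)+1) ≠ 0 := by positivity
      have h2 : ((t:ℚ)+2) ≠ 0 := by positivity
      have h3 : ((m':ℚ)+1) ≠ 0 := by positivity
      have h4 := factS_ne m'
      have h5 := factS_ne (m'+1)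
      rw [ih (m'+1), ih m', hfact] at hrec
      push_cast at hrec ⊢
      field_simp at hrec
      rw [hfact, eq_div_iff (by
        refine mul_ne_zero (by positivity) (mul_ne_zero h3 h4))]
      have hne : ((t:ℚ)+1)^2 * ((m'.factorial : ℕ) : ℚ) ≠ 0 := by
        refine mul_ne_zero (by positivity) h4
      have hscaled : Fr (t+1) (m'+1+1) * (((t:ℚ)+2) * (((m':ℚ)+1) * ((m'.factorial : ℕ) : ℚ)))
            * (((t:ℚ)+1)^2 * ((m'.factorial : ℕ) : ℚ))
          = Hml (t+1) (m'+1) * (((t:ℚ)+1)^2 * ((m'.factorial : ℕ) : ℚ)) := by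
        linear_combination ((t:ℚ)+1) * ((m'.factorial : ℕ) : ℚ) * hrec - ((t:ℚ)+1) * ((m'.factorial : ℕ) : ℚ) * goal'
      have hfin := mul_right_cancel₀ hne hscaled
      linear_combination hfin


lemma inner_eq (t m : ℕ) (hm : 1 ≤ m) :
    ∑ j ∈ Finset.Icc m (t+1),
        (t.choose (j-1) : ℚ) * (stirlingFirst j m : ℚ) / (j.factorial : ℚ) = Fr t m := by
  rw [Finset.sum_subset (Finset.Icc_subset_Icc_left hm)
    (fun j hj hj2 => by
      have h1 : j < m := by
        rw [Finset.mem_Icc] at hj hj2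
        omega
      rw [stirling_eq_zero j m h1]
      push_cast
      ring)]
  rw [Fr]
  refine Finset.sum_nbij' (i := fun j => j - 1) (j := fun i => i + 1) ?_ ?_ ?_ ?_ ?_
  · intro a ha; simp_all [Finset.mem_Icc, Finset.mem_range]; try omega
  · intro a ha; simp_all [Finset.mem_Icc, Finset.mem_range]; try omega
  · intro a ha; simp_all [Finset.mem_Icc, Finset.mem_range]; try omega
  · intro a ha; simp_all [Finset.mem_Icc, Finset.mem_range]; try omega
  · intro j hj
    rw [Finset.mem_Icc] at hj
    have e1 : j - 1 + 1 = j := by omega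
    rw [e1]

lemma step2 (t m' : ℕ) :
    Hml t m' / (((t:ℚ)+1) * ((m'.factorial : ℕ) : ℚ))
      = (Hml (t+1) (m'+1) - Hml t (m'+1)) / (((m'+1).factorial : ℕ) : ℚ) := by
  have hstar := star m' (t+1) (by omega)
  simp only [Nat.add_sub_cancel] at hstar
  push_cast at hstar
  have hfact : (((m'+1).factorial : ℕ) : ℚ) = ((m':ℚ)+1) * ((m'.factorial : ℕ) : ℚ) := by
    rw [Nat.factorial_succ]; push_cast; ring
  have h1 : ((t:ℚ)+1) ≠ 0 := by positivity
  have h3 : ((m':ℚ)+1) ≠ 0 := by positivity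
  have h4 := factS_ne m'
  rw [hfact, div_eq_div_iff (mul_ne_zero h1 h4) (mul_ne_zero h3 h4)]
  linear_combination (-((m'.factorial : ℕ) : ℚ)) * hstar

lemma telescope_down (i n M : ℕ) (hi1 : 1 ≤ i) (hi : i ≤ n) :
    ∑ k ∈ Finset.Icc i n, (Hml (n-k+1) M - Hml (n-k) M) = Hml (n+1-i) M - Hml 0 M := by
  have h := sum_Icc_telescope (n+1-i) (fun s => Hml s M)
  rw [← h]
  refine Finset.sum_nbij' (i := fun k => n+1-k) (j := fun s => n+1-s) ?_ ?_ ?_ ?_ ?_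
  · intro a ha; simp_all [Finset.mem_Icc]; try omega
  · intro a ha; simp_all [Finset.mem_Icc]; try omega
  · intro a ha; simp_all [Finset.mem_Icc]; try omega
  · intro a ha; simp_all [Finset.mem_Icc]; try omega
  · intro k hk
    rw [Finset.mem_Icc] at hk
    have e1 : n-k+1 = n+1-k := by omega
    have e2 : (n+1-k)-1 = n-k := by omega
    rw [e1, e2]

lemma abel_Hml (n M : ℕ) :
    ∑ k ∈ Finset.Icc 1 n, harm k * (Hml (n-k+1) M - Hml (n-k) M)
      = ∑ i ∈ Finset.Icc 1 n, (1:ℚ)/(i:ℚ) * (Hml (n+1-i) M - Hml 0 M) := by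
  have h1 : ∀ k ∈ Finset.Icc 1 n, harm k * (Hml (n-k+1) M - Hml (n-k) M)
      = ∑ i ∈ Finset.Icc 1 n,
          (if i ≤ k then (1:ℚ)/(i:ℚ) * (Hml (n-k+1) M - Hml (n-k) M) else 0) := by
    intro k hk
    rw [Finset.mem_Icc] at hk
    rw [← Finset.sum_filter]
    have hIcc : (Finset.Icc 1 n).filter (fun i => i ≤ k) = Finset.Icc 1 k := by
      ext a
      simp only [Finset.mem_filter, Finset.mem_Icc]
      omega
    rw [hIcc, harm, Finset.sum_mul]
  rw [Finset.sum_congr rfl h1, Finset.sum_comm]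
  refine Finset.sum_congr rfl fun i hi => ?_
  rw [Finset.mem_Icc] at hi
  rw [← Finset.sum_filter]
  have hIcc2 : (Finset.Icc 1 n).filter (fun k => i ≤ k) = Finset.Icc i n := by
    ext a
    simp only [Finset.mem_filter, Finset.mem_Icc]
    omega
  rw [hIcc2, ← Finset.mul_sum, telescope_down i n M hi.1 hi.2]

lemma final_sum (n M : ℕ) (hM : 1 ≤ M) :
    ∑ k ∈ Finset.Icc 1 n, harm k * (Hml (n-k+1) M - Hml (n-k) M) = Hml (n+1) (M+1) := by
  rw [abel_Hml n M, Hml_zero_left hM, Hml_succ (n+1) M,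
    Finset.sum_Icc_succ_top (by omega : 1 ≤ n+1)]
  have hz : Hml (n+1-(n+1)) M = 0 := by
    simp [Hml_zero_left hM]
  rw [hz, mul_zero, add_zero]
  refine Finset.sum_congr rfl fun i _ => ?_
  ring

theorem stmt_13 (n m : ℕ) (hm : 1 ≤ m) (hn : 1 ≤ n) :
    ∑ k ∈ Finset.Icc 1 n, harm k *
        ∑ j ∈ Finset.Icc m (n - k + 1),
          ((n - k).choose (j - 1) : ℚ) * (stirlingFirst j m : ℚ) / (j.factorial : ℚ) =
      (1 / (m.factorial : ℚ)) * Hml (n + 1) (m + 1) := by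
  obtain ⟨m', rfl⟩ : ∃ m', m = m' + 1 := ⟨m-1, by omega⟩
  have hkey : ∀ k ∈ Finset.Icc 1 n,
      harm k * ∑ j ∈ Finset.Icc (m'+1) (n - k + 1),
          ((n - k).choose (j - 1) : ℚ) * (stirlingFirst j (m'+1) : ℚ) / (j.factorial : ℚ)
      = (1 / (((m'+1).factorial : ℕ) : ℚ)) *
          (harm k * (Hml (n-k+1) (m'+1) - Hml (n-k) (m'+1))) := by
    intro k hk
    rw [inner_eq (n-k) (m'+1) (by omega), KL (n-k) m', step2 (n-k) m']
    ring
  rw [Finset.sum_congr rfl hkey, ← Finset.mul_sum,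
    final_sum n (m'+1) (by omega)]
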